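/- Let d ≥ 2, M > 0, let P ⊆ ℝ^d be M-separated and 2M-syndetic, and let 1 ≤ k ≤ d−1. For any p ∈ P, any τ ∈ D_k with τ ∪ {p} ∈ D_{k+1}, and any map λ : τ → [0,(M/3)²], there exists an open interval I(p,τ,λ) ⊆ ℝ such that: (1) if there exist w ∈ 𝒲 and τ̃ ∈ Del(P,w) with w(q) = λ(q) for all q ∈ τ and τ ∪ {p} ⊆ τ̃, then w(p) ∈ I(p,τ,λ); (2) the length of I(p,τ,λ) equals 8M·dist(p, H(τ)); (3) if p_i ∈ P, τ_i ∈ D_k with τ_i ∪ {p_i} ∈ D_{k+1} and λ_i : τ_i → [0,(M/3)²] for i = 1,2, and there exists t ∈ ℝ^d with τ₁ + t = τ₂, p₁ + t = p₂ and λ₁(q) = λ₂(q+t) for all q ∈ τ₁, then I(p₁,τ₁,λ₁) = I(p₂,τ₂,λ₂). -/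

import Mathlib

noncomputable section

open scoped Classical

open Metric

variable {d : ℕ}

/-- `P` is `M`-separated. -/
def IsSeparatedSet (M : ℝ) (P : Set (EuclideanSpace ℝ (Fin d))) : Prop :=
  ∀ p ∈ P, ∀ q ∈ P, p ≠ q → M ≤ dist p q

/-- `P` is `M`-syndetic. -/
def IsSyndeticSet (M : ℝ) (P : Set (EuclideanSpace ℝ (Fin d))) : Prop :=
  ∀ x : EuclideanSpace ℝ (Fin d), ∃ p ∈ P, dist x p < M

/-- `Δ_k(P)`: the `(k+1)`-element affinely independent subsets of `P`. -/
def DeltaK (k : ℕ) (P : Set (EuclideanSpace ℝ (Fin d))) :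
    Set (Finset (EuclideanSpace ℝ (Fin d))) :=
  {τ | τ.card = k + 1 ∧ ↑τ ⊆ P ∧
    AffineIndependent ℝ (fun q : (τ : Set (EuclideanSpace ℝ (Fin d))) =>
      (q : EuclideanSpace ℝ (Fin d)))}

/-- `(z,u)` is the orthosphere of `τ` with respect to the weight function `w`. -/
def IsOrthosphere (τ : Finset (EuclideanSpace ℝ (Fin d)))
    (w : EuclideanSpace ℝ (Fin d) → ℝ) (z : EuclideanSpace ℝ (Fin d)) (u : ℝ) : Prop :=
  z ∈ affineSpan ℝ (↑τ : Set (EuclideanSpace ℝ (Fin d))) ∧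
    ∀ p ∈ τ, ‖z - p‖ ^ 2 = u + w p

/-- `(z,u)` is empty in `(P,w)`. -/
def IsEmptySphere (P : Set (EuclideanSpace ℝ (Fin d)))
    (w : EuclideanSpace ℝ (Fin d) → ℝ) (z : EuclideanSpace ℝ (Fin d)) (u : ℝ) : Prop :=
  ∀ p ∈ P, 0 ≤ ‖z - p‖ ^ 2 - u - w p

/-- The set `𝒲` of weight functions on `P`: `0 ≤ w(p) ≤ (M/3)²` for `p ∈ P`. -/
def WeightFns (M : ℝ) (P : Set (EuclideanSpace ℝ (Fin d))) :
    Set (EuclideanSpace ℝ (Fin d) → ℝ) :=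
  {w | ∀ p ∈ P, w p ∈ Set.Icc (0 : ℝ) ((M / 3) ^ 2)}

/-- `Del(P,w)`: elements of `Δ_d(P)` whose orthosphere with respect to `w`
is empty in `(P,w)`. -/
def Del (P : Set (EuclideanSpace ℝ (Fin d))) (w : EuclideanSpace ℝ (Fin d) → ℝ) :
    Set (Finset (EuclideanSpace ℝ (Fin d))) :=
  {τ | τ ∈ DeltaK d P ∧ ∃ z u, IsOrthosphere τ w z u ∧ IsEmptySphere P w z u}

/-- `D_k`: those `τ ∈ Δ_k(P)` contained in some `τ' ∈ Del(P,w)` for some `w ∈ 𝒲`. -/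
def DSet (M : ℝ) (P : Set (EuclideanSpace ℝ (Fin d))) (k : ℕ) :
    Set (Finset (EuclideanSpace ℝ (Fin d))) :=
  {τ | τ ∈ DeltaK k P ∧ ∃ w ∈ WeightFns M P, ∃ τ' ∈ Del P w, τ ⊆ τ'}


open scoped RealInnerProductSpace in
lemma inner_eq_on_affineSpan {v : EuclideanSpace ℝ (Fin d)} {β : ℝ}
    {s : Set (EuclideanSpace ℝ (Fin d))} (h : ∀ q ∈ s, ⟪v, q⟫ = β)
    {x : EuclideanSpace ℝ (Fin d)} (hx : x ∈ affineSpan ℝ s) : ⟪v, x⟫ = β := by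
  refine affineSpan_induction (p := fun y => ⟪v, y⟫ = β) hx h ?_
  intro c a b y ha hb hy
  simp only [vsub_eq_sub, vadd_eq_add, inner_add_right, inner_sub_right,
    real_inner_smul_right, ha, hb, hy]
  ring

open scoped RealInnerProductSpace in
lemma ortho_unique {τ : Finset (EuclideanSpace ℝ (Fin d))} (hne : τ.Nonempty)
    {lam : EuclideanSpace ℝ (Fin d) → ℝ} {z z' : EuclideanSpace ℝ (Fin d)} {u u' : ℝ}
    (h : IsOrthosphere τ lam z u) (h' : IsOrthosphere τ lam z' u') : z = z' ∧ u = u' := by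
  obtain ⟨hz, he⟩ := h
  obtain ⟨hz', he'⟩ := h'
  have key : ∀ q ∈ (↑τ : Set (EuclideanSpace ℝ (Fin d))),
      ⟪z - z', q⟫ = (‖z‖ ^ 2 - ‖z'‖ ^ 2 - (u - u')) / 2 := by
    intro q hq
    have e1 := he q hq
    have e2 := he' q hq
    rw [norm_sub_sq_real] at e1 e2
    rw [inner_sub_left]
    linarith
  have b1 := inner_eq_on_affineSpan key hz
  have b2 := inner_eq_on_affineSpan key hz'
  have hzz : z = z' := by
    have h0 : ⟪z - z', z - z'⟫ = 0 := by rw [inner_sub_right, b1, b2]; ring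
    have := inner_self_eq_zero.mp h0
    exact sub_eq_zero.mp this
  refine ⟨hzz, ?_⟩
  obtain ⟨q, hq⟩ := hne
  have e1 := he q hq
  have e2 := he' q hq
  rw [hzz] at e1
  linarith

/-- Center/height functional used to define the interval `I(p,τ,λ)`. -/
def orthoC (p : EuclideanSpace ℝ (Fin d)) (τ : Finset (EuclideanSpace ℝ (Fin d)))
    (lam : EuclideanSpace ℝ (Fin d) → ℝ) : ℝ :=
  if h : ∃ zu : EuclideanSpace ℝ (Fin d) × ℝ, IsOrthosphere τ lam zu.1 zu.2
  then ‖h.choose.1 - p‖ ^ 2 - h.choose.2 else 0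

lemma orthoC_eq {p : EuclideanSpace ℝ (Fin d)} {τ : Finset (EuclideanSpace ℝ (Fin d))}
    {lam : EuclideanSpace ℝ (Fin d) → ℝ} (hne : τ.Nonempty)
    {z : EuclideanSpace ℝ (Fin d)} {u : ℝ} (h : IsOrthosphere τ lam z u) :
    orthoC p τ lam = ‖z - p‖ ^ 2 - u := by
  have hex : ∃ zu : EuclideanSpace ℝ (Fin d) × ℝ, IsOrthosphere τ lam zu.1 zu.2 := ⟨(z, u), h⟩
  rw [orthoC, dif_pos hex]
  obtain ⟨h1, h2⟩ := ortho_unique hne hex.choose_spec h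
  rw [h1, h2]

lemma ortho_translate {τ : Finset (EuclideanSpace ℝ (Fin d))}
    {lam lam' : EuclideanSpace ℝ (Fin d) → ℝ} {t : EuclideanSpace ℝ (Fin d)}
    (hl : ∀ q ∈ τ, lam q = lam' (q + t)) {z : EuclideanSpace ℝ (Fin d)} {u : ℝ}
    (h : IsOrthosphere τ lam z u) :
    IsOrthosphere (τ.image (fun q => q + t)) lam' (z + t) u := by
  obtain ⟨hz, he⟩ := h
  have f : EuclideanSpace ℝ (Fin d) →ᵃ[ℝ] EuclideanSpace ℝ (Fin d) :=
    (AffineEquiv.constVAdd ℝ (EuclideanSpace ℝ (Fin d)) t).toAffineMap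
  constructor
  · set f : EuclideanSpace ℝ (Fin d) →ᵃ[ℝ] EuclideanSpace ℝ (Fin d) :=
      (AffineEquiv.constVAdd ℝ (EuclideanSpace ℝ (Fin d)) t).toAffineMap with hf
    have hfa : ∀ x : EuclideanSpace ℝ (Fin d), f x = x + t := by
      intro x
      show t +ᵥ x = x + t
      simp [add_comm]
    have himg : (↑(τ.image (fun q => q + t)) : Set (EuclideanSpace ℝ (Fin d)))
        = f '' (↑τ : Set (EuclideanSpace ℝ (Fin d))) := by
      rw [Finset.coe_image]
      exact (Set.image_congr' hfa (s := (↑τ : Set (EuclideanSpace ℝ (Fin d))))).symm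
    have hmem : f z ∈ (affineSpan ℝ (↑τ : Set (EuclideanSpace ℝ (Fin d)))).map f :=
      AffineSubspace.mem_map_of_mem _ hz
    rw [AffineSubspace.map_span] at hmem
    rw [himg, ← hfa z]
    exact hmem
  · intro q hq
    obtain ⟨q₁, hq₁, rfl⟩ := Finset.mem_image.mp hq
    have : z + t - (q₁ + t) = z - q₁ := by abel
    rw [this, he q₁ hq₁, hl q₁ hq₁]

set_option maxHeartbeats 1000000 in
/-- Existence of the intervals `I(p,τ,λ)`: for each `p ∈ P`, `τ ∈ D_k` with
`τ ∪ {p} ∈ D_{k+1}` and `λ : τ → [0,(M/3)²]`, there is an open interval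
`I(p,τ,λ) ⊆ ℝ` such that (1) any weight function `w ∈ 𝒲` extending `λ` admitting
a cell of `Del(P,w)` containing `τ ∪ {p}` satisfies `w(p) ∈ I(p,τ,λ)`;
(2) the length of `I(p,τ,λ)` is `8M·d(p,H(τ))`; and (3) the assignment is
translation invariant. -/
theorem stmt6 (hd : 2 ≤ d) (M : ℝ) (hM : 0 < M)
    (P : Set (EuclideanSpace ℝ (Fin d)))
    (hsep : IsSeparatedSet M P) (hsyn : IsSyndeticSet (2 * M) P)
    (k : ℕ) (hk1 : 1 ≤ k) (hkd : k ≤ d - 1) :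
    ∃ I : EuclideanSpace ℝ (Fin d) → Finset (EuclideanSpace ℝ (Fin d)) →
        (EuclideanSpace ℝ (Fin d) → ℝ) → Set ℝ,
      (∀ (p : EuclideanSpace ℝ (Fin d)) (τ : Finset (EuclideanSpace ℝ (Fin d)))
          (lam : EuclideanSpace ℝ (Fin d) → ℝ),
        p ∈ P → τ ∈ DSet M P k → insert p τ ∈ DSet M P (k + 1) →
        (∀ q ∈ τ, lam q ∈ Set.Icc (0 : ℝ) ((M / 3) ^ 2)) →
        -- (1)
        ((∀ w ∈ WeightFns M P, (∀ q ∈ τ, w q = lam q) →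
            (∃ τ' ∈ Del P w, insert p τ ⊆ τ') → w p ∈ I p τ lam) ∧
        -- (2): `I p τ lam` is an open interval of length `8M·d(p,H(τ))`
          ∃ a b : ℝ, I p τ lam = Set.Ioo a b ∧
            b - a = 8 * M *
              Metric.infDist p (affineSpan ℝ (↑τ : Set (EuclideanSpace ℝ (Fin d)))
                : Set (EuclideanSpace ℝ (Fin d))))) ∧
      -- (3): translation invariance
      (∀ (p₁ p₂ : EuclideanSpace ℝ (Fin d))
          (τ₁ τ₂ : Finset (EuclideanSpace ℝ (Fin d)))
          (lam₁ lam₂ : EuclideanSpace ℝ (Fin d) → ℝ),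
        p₁ ∈ P → τ₁ ∈ DSet M P k → insert p₁ τ₁ ∈ DSet M P (k + 1) →
        (∀ q ∈ τ₁, lam₁ q ∈ Set.Icc (0 : ℝ) ((M / 3) ^ 2)) →
        p₂ ∈ P → τ₂ ∈ DSet M P k → insert p₂ τ₂ ∈ DSet M P (k + 1) →
        (∀ q ∈ τ₂, lam₂ q ∈ Set.Icc (0 : ℝ) ((M / 3) ^ 2)) →
        (∃ t : EuclideanSpace ℝ (Fin d), τ₁.image (fun q => q + t) = τ₂ ∧
          p₁ + t = p₂ ∧ ∀ q ∈ τ₁, lam₁ q = lam₂ (q + t)) →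
        I p₁ τ₁ lam₁ = I p₂ τ₂ lam₂) := by
  classical
  refine ⟨fun p τ lam => Set.Ioo
      (orthoC p τ lam - 4 * M * Metric.infDist p
        (affineSpan ℝ (↑τ : Set (EuclideanSpace ℝ (Fin d))) : Set (EuclideanSpace ℝ (Fin d))))
      (orthoC p τ lam + 4 * M * Metric.infDist p
        (affineSpan ℝ (↑τ : Set (EuclideanSpace ℝ (Fin d))) : Set (EuclideanSpace ℝ (Fin d)))),
      ?_, ?_⟩
  · intro p τ lam hp hτ hpτ hlam
    obtain ⟨⟨hcard, hτP, -⟩, -⟩ := hτ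
    obtain ⟨⟨hcard', -, hai⟩, -⟩ := hpτ
    have hpnotτ : p ∉ τ := by
      intro hmem
      rw [Finset.insert_eq_self.mpr hmem, hcard] at hcard'
      omega
    have hτne : τ.Nonempty := Finset.card_pos.mp (by omega)
    set S : AffineSubspace ℝ (EuclideanSpace ℝ (Fin d)) :=
      affineSpan ℝ (↑τ : Set (EuclideanSpace ℝ (Fin d))) with hSdef
    haveI : Nonempty S :=
      ⟨⟨hτne.choose, subset_affineSpan ℝ _ (Finset.mem_coe.mpr hτne.choose_spec)⟩⟩
    have hSclosed : IsClosed (S : Set (EuclideanSpace ℝ (Fin d))) :=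
      S.closed_of_finiteDimensional
    -- p is not in S
    have hpS : p ∉ S := by
      intro hmem
      have hpi : p ∈ (↑(insert p τ) : Set (EuclideanSpace ℝ (Fin d))) := by simp
      refine hai.notMem_affineSpan_diff ⟨p, hpi⟩ Set.univ ?_
      have hsubset : (↑τ : Set (EuclideanSpace ℝ (Fin d))) ⊆
          (fun q : (↑(insert p τ) : Set (EuclideanSpace ℝ (Fin d))) =>
            (q : EuclideanSpace ℝ (Fin d))) '' (Set.univ \ {⟨p, hpi⟩}) := by
        intro q hq
        have hq' : q ∈ (↑(insert p τ) : Set (EuclideanSpace ℝ (Fin d))) := by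
          simp only [Finset.coe_insert, Set.mem_insert_iff]
          exact Or.inr hq
        refine ⟨⟨q, hq'⟩, ⟨trivial, ?_⟩, rfl⟩
        simp only [Set.mem_singleton_iff]
        intro hEq
        have hqp : q = p := congrArg Subtype.val hEq
        exact hpnotτ (Finset.mem_coe.mp (hqp ▸ hq))
      exact affineSpan_mono ℝ hsubset hmem
    have hh : 0 < Metric.infDist p (S : Set (EuclideanSpace ℝ (Fin d))) :=
      (hSclosed.notMem_iff_infDist_pos ⟨_, Classical.choice ‹Nonempty S› |>.2⟩).mp hpS
    constructor
    · rintro w hw hwlam ⟨τ', hτ', hsub⟩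
      obtain ⟨-, z, u, ⟨hzS, hze⟩, hempty⟩ := hτ'
      have hpτ' : p ∈ τ' := hsub (Finset.mem_insert_self p τ)
      have hττ' : ∀ q ∈ τ, q ∈ τ' := fun q hq => hsub (Finset.mem_insert_of_mem hq)
      set z₀ : EuclideanSpace ℝ (Fin d) :=
        (EuclideanGeometry.orthogonalProjection S z : EuclideanSpace ℝ (Fin d)) with hz₀def
      have hz₀S : z₀ ∈ S := EuclideanGeometry.orthogonalProjection_mem z
      have pyth : ∀ x ∈ S, ‖z - x‖ ^ 2 = ‖z - z₀‖ ^ 2 + ‖z₀ - x‖ ^ 2 := by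
        intro x hx
        have h1 :=
          EuclideanGeometry.dist_sq_eq_dist_orthogonalProjection_sq_add_dist_orthogonalProjection_sq
            (s := S) z hx
        rw [← hz₀def] at h1
        simp only [dist_eq_norm] at h1
        rw [show ‖x - z‖ = ‖z - x‖ from norm_sub_rev _ _,
          show ‖x - z₀‖ = ‖z₀ - x‖ from norm_sub_rev _ _] at h1
        rw [sq, sq, sq]
        linarith
      have hperp : ∀ y ∈ S.direction, (inner ℝ (z - z₀) y : ℝ) = 0 := by
        intro y hy
        have hmem := EuclideanGeometry.vsub_orthogonalProjection_mem_direction_orthogonal S z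
        rw [← hz₀def, vsub_eq_sub] at hmem
        have := (Submodule.mem_orthogonal _ _).mp hmem y hy
        rw [real_inner_comm] at this
        exact this
      clear_value z₀
      have hz₀q : ∀ q ∈ τ, ‖z₀ - q‖ ^ 2 = (u - ‖z - z₀‖ ^ 2) + lam q := by
        intro q hq
        have h1 := pyth q (subset_affineSpan ℝ _ (Finset.mem_coe.mpr hq))
        have h2 := hze q (hττ' q hq)
        have h3 := hwlam q hq
        linarith
      have hOτ : IsOrthosphere τ lam z₀ (u - ‖z - z₀‖ ^ 2) := ⟨hz₀S, hz₀q⟩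
      have hC : orthoC p τ lam = ‖z₀ - p‖ ^ 2 - (u - ‖z - z₀‖ ^ 2) := orthoC_eq hτne hOτ
      have hwp : w p = ‖z - p‖ ^ 2 - u := by
        have := hze p hpτ'
        linarith
      set p' : EuclideanSpace ℝ (Fin d) :=
        (EuclideanGeometry.orthogonalProjection S p : EuclideanSpace ℝ (Fin d)) with hp'def
      have hp'S : p' ∈ S := EuclideanGeometry.orthogonalProjection_mem p
      have hdistp : dist p p' = Metric.infDist p (S : Set (EuclideanSpace ℝ (Fin d))) := by
        refine le_antisymm ?_ (Metric.infDist_le_dist_of_mem hp'S)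
        by_contra hlt
        push_neg at hlt
        obtain ⟨y, hyS, hylt⟩ := (Metric.infDist_lt_iff ⟨p', hp'S⟩).mp hlt
        have h1 :=
          EuclideanGeometry.dist_sq_eq_dist_orthogonalProjection_sq_add_dist_orthogonalProjection_sq
            (s := S) p hyS
        rw [← hp'def] at h1
        have h2 : dist p p' ≤ dist y p := by
          nlinarith [dist_nonneg (x := y) (y := p'), dist_nonneg (x := p) (y := p'),
            dist_nonneg (x := y) (y := p)]
        rw [dist_comm y p] at h2
        linarith
      clear_value p'
      have key : w p - orthoC p τ lam = 2 * (inner ℝ (z - z₀) (z₀ - p) : ℝ) := by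
        have hsplit : z - p = (z - z₀) + (z₀ - p) := by abel
        have expand : ‖z - p‖ ^ 2
            = ‖z - z₀‖ ^ 2 + 2 * (inner ℝ (z - z₀) (z₀ - p) : ℝ) + ‖z₀ - p‖ ^ 2 := by
          rw [hsplit, norm_add_sq_real]
        rw [hwp, hC]
        linarith
      have key2 : (inner ℝ (z - z₀) (z₀ - p) : ℝ) = inner ℝ (z - z₀) (p' - p) := by
        have h1 : (inner ℝ (z - z₀) (z₀ - p') : ℝ) = 0 := by
          have := AffineSubspace.vsub_mem_direction hz₀S hp'S
          rw [vsub_eq_sub] at this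
          exact hperp _ this
        have hsplit : z₀ - p = (z₀ - p') + (p' - p) := by abel
        rw [hsplit, inner_add_right, h1, zero_add]
      obtain ⟨q', hq'P, hq'lt⟩ := hsyn z
      have hu4 : u < 4 * M ^ 2 := by
        have h1 := hempty q' hq'P
        have h2 := (hw q' hq'P).1
        have h3 : ‖z - q'‖ = dist z q' := (dist_eq_norm _ _).symm
        nlinarith [dist_nonneg (x := z) (y := q')]
      have hus : 5 * M ^ 2 / 36 ≤ u - ‖z - z₀‖ ^ 2 := by
        obtain ⟨q₁, hq₁, q₂, hq₂, hqne⟩ := Finset.one_lt_card.mp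
          (show 1 < τ.card by omega)
        have hsep' := hsep q₁ (hτP hq₁) q₂ (hτP hq₂) hqne
        have e1 := hz₀q q₁ hq₁
        have e2 := hz₀q q₂ hq₂
        have l1 := (hlam q₁ hq₁).2
        have l2 := (hlam q₂ hq₂).2
        have tri : dist q₁ q₂ ≤ ‖z₀ - q₁‖ + ‖z₀ - q₂‖ := by
          have := dist_triangle q₁ z₀ q₂
          rw [dist_eq_norm, dist_eq_norm, dist_eq_norm] at this
          rw [show ‖q₁ - z₀‖ = ‖z₀ - q₁‖ from norm_sub_rev _ _] at this
          exact this
        nlinarith [norm_nonneg (z₀ - q₁), norm_nonneg (z₀ - q₂),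
          sq_nonneg (‖z₀ - q₁‖ - ‖z₀ - q₂‖), hM]
      have hvlt : ‖z - z₀‖ < 2 * M := by
        nlinarith [norm_nonneg (z - z₀), hM]
      have hnorm : ‖p' - p‖ = Metric.infDist p (S : Set (EuclideanSpace ℝ (Fin d))) := by
        rw [← hdistp, dist_eq_norm, norm_sub_rev]
      have habs : |w p - orthoC p τ lam|
          ≤ 2 * ‖z - z₀‖ * Metric.infDist p (S : Set (EuclideanSpace ℝ (Fin d))) := by
        rw [key, key2]
        have h2 : |(inner ℝ (z - z₀) (p' - p) : ℝ)|
            ≤ ‖z - z₀‖ * Metric.infDist p (S : Set (EuclideanSpace ℝ (Fin d))) := by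
          rw [← hnorm]
          exact abs_real_inner_le_norm _ _
        rw [abs_mul, abs_two]
        linarith
      have hfin : |w p - orthoC p τ lam|
          < 4 * M * Metric.infDist p (S : Set (EuclideanSpace ℝ (Fin d))) := by
        have h3 : 2 * ‖z - z₀‖ * Metric.infDist p (S : Set (EuclideanSpace ℝ (Fin d)))
            < 4 * M * Metric.infDist p (S : Set (EuclideanSpace ℝ (Fin d))) := by
          have h4 : 2 * ‖z - z₀‖ < 4 * M := by linarith
          nlinarith
        linarith
      rw [abs_lt] at hfin
      rw [Set.mem_Ioo]
      constructor <;> [linarith [hfin.1]; linarith [hfin.2]]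
    · exact ⟨_, _, rfl, by ring⟩
  · rintro p₁ p₂ τ₁ τ₂ lam₁ lam₂ hp₁ hτ₁ - - hp₂ hτ₂ - - ⟨t, himg, hpt, hlt⟩
    have hτ₁ne : τ₁.Nonempty := Finset.card_pos.mp (by rw [hτ₁.1.1]; omega)
    have hτ₂ne : τ₂.Nonempty := Finset.card_pos.mp (by rw [hτ₂.1.1]; omega)
    have hback : τ₂.image (fun q => q + -t) = τ₁ := by
      rw [← himg, Finset.image_image]
      ext x
      simp
    have hltback : ∀ q ∈ τ₂, lam₂ q = lam₁ (q + -t) := by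
      intro q hq
      rw [← himg] at hq
      obtain ⟨q₁, hq₁, rfl⟩ := Finset.mem_image.mp hq
      rw [add_neg_cancel_right]
      exact (hlt q₁ hq₁).symm
    have hfun : (fun q : EuclideanSpace ℝ (Fin d) => q + t)
        = fun q => (AffineEquiv.constVAdd ℝ (EuclideanSpace ℝ (Fin d)) t : _ →ᵃ[ℝ] _) q := by
      funext q
      show q + t = t +ᵥ q
      simp [add_comm]
    have hset : (affineSpan ℝ (↑τ₂ : Set (EuclideanSpace ℝ (Fin d)))
          : Set (EuclideanSpace ℝ (Fin d)))
        = (fun x : EuclideanSpace ℝ (Fin d) => x + t) ''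
          (affineSpan ℝ (↑τ₁ : Set (EuclideanSpace ℝ (Fin d)))
            : Set (EuclideanSpace ℝ (Fin d))) := by
      have h1 : (↑τ₂ : Set (EuclideanSpace ℝ (Fin d)))
          = (fun x : EuclideanSpace ℝ (Fin d) => x + t) '' ↑τ₁ := by
        rw [← himg, Finset.coe_image]
      rw [h1, hfun, ← AffineSubspace.map_span, AffineSubspace.coe_map]
    have hisom : Isometry (fun x : EuclideanSpace ℝ (Fin d) => x + t) :=
      Isometry.of_dist_eq fun a b => dist_add_right a b t
    have hdist : Metric.infDist p₂ (affineSpan ℝ (↑τ₂ : Set (EuclideanSpace ℝ (Fin d)))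
          : Set (EuclideanSpace ℝ (Fin d)))
        = Metric.infDist p₁ (affineSpan ℝ (↑τ₁ : Set (EuclideanSpace ℝ (Fin d)))
          : Set (EuclideanSpace ℝ (Fin d))) := by
      rw [← hpt, hset]
      exact Metric.infDist_image hisom
    have hC : orthoC p₁ τ₁ lam₁ = orthoC p₂ τ₂ lam₂ := by
      by_cases hex : ∃ zu : EuclideanSpace ℝ (Fin d) × ℝ, IsOrthosphere τ₁ lam₁ zu.1 zu.2
      · obtain ⟨⟨z, u⟩, hzu⟩ := hex
        have h2 := ortho_translate hlt hzu
        rw [himg] at h2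
        rw [orthoC_eq hτ₁ne hzu, orthoC_eq hτ₂ne h2, ← hpt]
        have h3 : z + t - (p₁ + t) = z - p₁ := by abel
        rw [h3]
      · have hex₂ : ¬ ∃ zu : EuclideanSpace ℝ (Fin d) × ℝ, IsOrthosphere τ₂ lam₂ zu.1 zu.2 := by
          rintro ⟨⟨z, u⟩, hzu⟩
          have h2 := ortho_translate hltback hzu
          rw [hback] at h2
          exact hex ⟨(z + -t, u), h2⟩
        rw [orthoC, orthoC, dif_neg hex, dif_neg hex₂]
    simp only [hC, hdist]
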